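/- For every prime p different from 2 and 5, π(p) divides p² − 1. -/

import Mathlib

/-- The Pisano period `π(m)`: the least positive integer `k` such that
`F_{n+k} ≡ F_n (mod m)` for all `n ≥ 0`. -/
noncomputable def pisano (m : ℕ) : ℕ :=
  sInf {k : ℕ | 0 < k ∧ ∀ n : ℕ, Nat.fib (n + k) ≡ Nat.fib n [MOD m]}

private lemma fib_period_mul {m c : ℕ} (h : ∀ n, Nat.fib (n + c) ≡ Nat.fib n [MOD m]) :
    ∀ q n, Nat.fib (n + q * c) ≡ Nat.fib n [MOD m] := by
  intro q
  induction q with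
  | zero => simp [Nat.ModEq.refl]
  | succ q ih =>
    intro n
    have e : n + (q + 1) * c = (n + q * c) + c := by ring
    rw [e]
    exact (h (n + q * c)).trans (ih n)

/-- for every prime `p ≠ 2, 5`, `π(p) ∣ p² - 1`. -/
theorem pisano_dvd_sq_sub_one (p : ℕ) (hp : p.Prime) (hp2 : p ≠ 2) (hp5 : p ≠ 5) :
    pisano p ∣ p ^ 2 - 1 := by
  haveI : Fact p.Prime := ⟨hp⟩
  set K := GaloisField p 2 with hK
  have hpodd : Odd p := hp.odd_of_ne_two hp2
  have hp3 : 3 ≤ p := by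
    have := hp.two_le; omega
  haveI : Fintype K := Fintype.ofFinite K
  have cardK : Fintype.card K = p ^ 2 := by
    rw [← Nat.card_eq_fintype_card]
    exact GaloisField.card p 2 two_ne_zero
  have hchar : ringChar K = p := ringChar.eq K p
  have h5ne : (5 : K) ≠ 0 := by
    rw [Ne, show (5 : K) = ((5 : ℕ) : K) by norm_cast, CharP.cast_eq_zero_iff K p 5]
    intro hdvd
    exact hp5 ((Nat.prime_dvd_prime_iff_eq hp (by norm_num)).mp hdvd)
  have h2ne : (2 : K) ≠ 0 := by
    rw [Ne, show (2 : K) = ((2 : ℕ) : K) by norm_cast, CharP.cast_eq_zero_iff K p 2]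
    intro hdvd
    exact hp2 ((Nat.prime_dvd_prime_iff_eq hp (by norm_num)).mp hdvd)
  -- (5 : K)^p = 5  (Frobenius fixes the prime field)
  have h5frob : (5 : K) ^ p = 5 := by
    have := map_natCast (frobenius K p) 5
    rwa [frobenius_def, Nat.cast_ofNat] at this
  have h5fermat : (5 : K) ^ (p - 1) = 1 := by
    have h : (5 : K) ^ (p - 1) * 5 = 1 * 5 := by
      rw [one_mul, ← pow_succ]
      have : p - 1 + 1 = p := by omega
      rw [this, h5frob]
    exact mul_right_cancel₀ h5ne h
  -- 5 is a square in K = GF(p²)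
  have h5sq : IsSquare (5 : K) := by
    rw [FiniteField.isSquare_iff (by rw [hchar]; exact hp2) h5ne, cardK]
    have hsplit : p ^ 2 / 2 = (p - 1) * ((p + 1) / 2) := by
      obtain ⟨c, hc⟩ := hpodd
      have e1 : p ^ 2 = 4 * (c * c) + 4 * c + 1 := by subst hc; ring
      have e2 : (p + 1) / 2 = c + 1 := by omega
      rw [e2]
      have e3 : (p - 1) * (c + 1) = 2 * (c * c) + 2 * c := by
        have h4 : p - 1 = 2 * c := by omega
        rw [h4]; ring
      omega
    rw [hsplit, pow_mul, h5fermat, one_pow]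
  obtain ⟨s, hs⟩ := h5sq
  have hsne : s ≠ 0 := by
    intro h; rw [h, mul_zero] at hs; exact h5ne hs
  set α : K := (1 + s) / 2 with hα
  set β : K := (1 - s) / 2 with hβ
  have hsum : α + β = 1 := by rw [hα, hβ]; rw [← add_div, div_eq_iff h2ne]; ring
  have hprod : α * β = -1 := by
    have h4 : (2 : K) * 2 ≠ 0 := mul_ne_zero h2ne h2ne
    rw [hα, hβ, div_mul_div_comm, div_eq_iff h4]
    linear_combination hs
  have hdiff : α - β = s := by rw [hα, hβ]; rw [div_sub_div_same, div_eq_iff h2ne]; ring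
  have hα2 : α ^ 2 = α + 1 := by linear_combination α * hsum - hprod
  have hβ2 : β ^ 2 = β + 1 := by linear_combination β * hsum - hprod
  have hαne : α ≠ 0 := by
    intro h; rw [h, zero_mul] at hprod
    exact one_ne_zero (neg_eq_zero.mp hprod.symm)
  have hβne : β ≠ 0 := by
    intro h; rw [h, mul_zero] at hprod
    exact one_ne_zero (neg_eq_zero.mp hprod.symm)
  clear_value α β
  -- Binet's formula in K
  have binet : ∀ n : ℕ, s * (Nat.fib n : K) = α ^ n - β ^ n := by
    intro n
    induction n using Nat.twoStepInduction with
    | zero => simp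
    | one => simpa using hdiff.symm
    | more n ih1 ih2 =>
      rw [Nat.fib_add_two]
      push_cast
      linear_combination ih1 + ih2 - α ^ n * hα2 + β ^ n * hβ2
  set k : ℕ := p ^ 2 - 1 with hk
  have hαpow : α ^ k = 1 := by
    rw [hk, ← cardK]; exact FiniteField.pow_card_sub_one_eq_one α hαne
  have hβpow : β ^ k = 1 := by
    rw [hk, ← cardK]; exact FiniteField.pow_card_sub_one_eq_one β hβne
  -- k = p² - 1 is a period of Fibonacci mod p
  have key : ∀ n : ℕ, Nat.fib (n + k) ≡ Nat.fib n [MOD p] := by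
    intro n
    have e1 := binet (n + k)
    rw [pow_add, pow_add, hαpow, hβpow, mul_one, mul_one] at e1
    have e2 : s * (Nat.fib (n + k) : K) = s * (Nat.fib n : K) := e1.trans (binet n).symm
    have e3 : (Nat.fib (n + k) : K) = (Nat.fib n : K) := mul_left_cancel₀ hsne e2
    exact (CharP.natCast_eq_natCast K p).mp e3
  -- minimal period divides any period
  have hkpos : 0 < k := by
    rw [hk, pow_two]
    have := Nat.mul_le_mul hp3 hp3
    omega
  have hmem : pisano p ∈ {k : ℕ | 0 < k ∧ ∀ n : ℕ, Nat.fib (n + k) ≡ Nat.fib n [MOD p]} :=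
    Nat.sInf_mem ⟨k, hkpos, key⟩
  obtain ⟨hπpos, hπ⟩ := hmem
  set π := pisano p with hπdef
  have hr : ∀ n, Nat.fib (n + k % π) ≡ Nat.fib n [MOD p] := by
    intro n
    have e : n + k = (n + k % π) + (k / π) * π := by
      have h1 := Nat.div_add_mod k π
      have h2 : (k / π) * π = π * (k / π) := Nat.mul_comm _ _
      omega
    calc Nat.fib (n + k % π) ≡ Nat.fib ((n + k % π) + (k / π) * π) [MOD p] :=
          (fib_period_mul hπ (k / π) (n + k % π)).symm
      _ = Nat.fib (n + k) := by rw [← e]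
      _ ≡ Nat.fib n [MOD p] := key n
  rcases Nat.eq_zero_or_pos (k % π) with h0 | hpos
  · exact Nat.dvd_of_mod_eq_zero h0
  · exfalso
    have hle : π ≤ k % π := Nat.sInf_le ⟨hpos, hr⟩
    have hlt : k % π < π := Nat.mod_lt _ hπpos
    omega
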